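/- Let ρ ∈ (0,1), x₀ ∈ (0,1), and for n ≥ 0 set b_n = 1 - x₀(1-(1-ρ)^n). Then for every n ≥ 0, (1-ρ)^{n-1}/(b_{n+1}b_n) = (1/(ρ(1-x₀)))·((1-ρ)^{n-1}/b_n - (1-ρ)^n/b_{n+1}); consequently ∑_{n=0}^∞ (1-ρ)^{n-1}/(b_{n+1}b_n) = 1/(ρ(1-ρ)(1-x₀)). -/

import Mathlib

theorem telescoping_sum (ρ x₀ : ℝ) (hρ : ρ ∈ Set.Ioo (0:ℝ) 1) (hx₀ : x₀ ∈ Set.Ioo (0:ℝ) 1)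
    (b : ℕ → ℝ) (hb : ∀ n, b n = 1 - x₀ * (1 - (1 - ρ) ^ n)) :
    (∀ n : ℕ, (1 - ρ) ^ ((n : ℤ) - 1) / (b (n + 1) * b n)
      = (1 / (ρ * (1 - x₀))) *
        ((1 - ρ) ^ ((n : ℤ) - 1) / b n - (1 - ρ) ^ (n : ℤ) / b (n + 1))) ∧
    (∑' n : ℕ, (1 - ρ) ^ ((n : ℤ) - 1) / (b (n + 1) * b n))
      = 1 / (ρ * (1 - ρ) * (1 - x₀)) := by
  obtain ⟨hρ0, hρ1⟩ := hρ
  obtain ⟨hx0, hx1⟩ := hx₀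
  have hr0 : (0:ℝ) < 1 - ρ := by linarith
  have hx : (0:ℝ) < 1 - x₀ := by linarith
  have hbpos : ∀ n, 0 < b n := by
    intro n
    rw [hb n]
    have h1 : (1 - ρ) ^ n ≤ 1 := pow_le_one₀ (le_of_lt hr0) (by linarith)
    have h2 : 0 < (1 - ρ) ^ n := pow_pos hr0 n
    nlinarith
  have key : ∀ n : ℕ, b (n + 1) - (1 - ρ) * b n = ρ * (1 - x₀) := by
    intro n
    rw [hb (n+1), hb n, pow_succ]
    ring
  have hpow : ∀ n : ℕ, (1 - ρ) ^ ((n : ℤ) - 1) = (1 - ρ) ^ n / (1 - ρ) := by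
    intro n
    rw [zpow_sub_one₀ (ne_of_gt hr0), zpow_natCast, div_eq_mul_inv]
  have part1 : ∀ n : ℕ, (1 - ρ) ^ ((n : ℤ) - 1) / (b (n + 1) * b n)
      = (1 / (ρ * (1 - x₀))) *
        ((1 - ρ) ^ ((n : ℤ) - 1) / b n - (1 - ρ) ^ (n : ℤ) / b (n + 1)) := by
    intro n
    have hk := key n
    have h1 := hbpos n
    have h2 := hbpos (n+1)
    rw [hpow n, zpow_natCast]
    field_simp
    linear_combination (-1) * hk
  refine ⟨part1, ?_⟩
  -- define f
  set f : ℕ → ℝ := fun n => (1 - ρ) ^ ((n : ℤ) - 1) / b n with hf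
  have hterm : ∀ n : ℕ, (1 - ρ) ^ ((n : ℤ) - 1) / (b (n + 1) * b n)
      = (1 / (ρ * (1 - x₀))) * (f n - f (n + 1)) := by
    intro n
    rw [part1 n]
    congr 2
    simp only [hf]
    congr 1
    push_cast
    ring
  have hflim : Filter.Tendsto f Filter.atTop (nhds 0) := by
    have hlim1 : Filter.Tendsto (fun n : ℕ => (1 - ρ) ^ ((n:ℤ) - 1)) Filter.atTop (nhds 0) := by
      simp only [hpow]
      have := tendsto_pow_atTop_nhds_zero_of_lt_one (le_of_lt hr0) (by linarith : 1 - ρ < 1)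
      simpa using this.div_const (1 - ρ)
    have hlimb : Filter.Tendsto b Filter.atTop (nhds (1 - x₀)) := by
      have := tendsto_pow_atTop_nhds_zero_of_lt_one (le_of_lt hr0) (by linarith : 1 - ρ < 1)
      have h : Filter.Tendsto (fun n : ℕ => 1 - x₀ * (1 - (1 - ρ) ^ n)) Filter.atTop
          (nhds (1 - x₀ * (1 - 0))) := by
        exact (tendsto_const_nhds.sub ((tendsto_const_nhds.sub this).const_mul x₀))
      simpa [funext hb] using h
    have := hlim1.div hlimb (ne_of_gt hx)
    rw [zero_div] at this
    exact this
  have hsum : HasSum (fun n : ℕ => f n - f (n + 1)) (f 0) := by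
    have hnn : ∀ n : ℕ, 0 ≤ f n - f (n + 1) := by
      intro n
      have := hterm n
      have hpos : 0 < (1 - ρ) ^ ((n : ℤ) - 1) / (b (n + 1) * b n) :=
        div_pos (zpow_pos hr0 _) (mul_pos (hbpos (n+1)) (hbpos n))
      have hc : 0 < ρ * (1 - x₀) := mul_pos hρ0 hx
      nlinarith [this, hpos, one_div_pos.mpr hc]
    rw [hasSum_iff_tendsto_nat_of_nonneg hnn]
    have heq : ∀ n : ℕ, ∑ i ∈ Finset.range n, (f i - f (i + 1)) = f 0 - f n := by
      intro n
      exact Finset.sum_range_sub' f n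
    simp only [heq]
    have := (tendsto_const_nhds : Filter.Tendsto (fun _ : ℕ => f 0) Filter.atTop (nhds (f 0))).sub hflim
    simpa using this
  have hsum2 : HasSum (fun n : ℕ => (1 - ρ) ^ ((n : ℤ) - 1) / (b (n + 1) * b n))
      ((1 / (ρ * (1 - x₀))) * f 0) := by
    have := hsum.mul_left (1 / (ρ * (1 - x₀)))
    simpa only [← hterm] using this
  rw [hsum2.tsum_eq]
  have hf0 : f 0 = 1 / (1 - ρ) := by
    simp only [hf]
    rw [hb 0]
    norm_num
  rw [hf0]
  field_simp
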